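/- arXiv:math/0607249 — 4 statements merged into one kernel-verified Lean document; each statement's English description precedes it below -/
import Mathlib

section
/- For b in NA, the graph G(b) is disconnected if and only if b is a Betti A-degree of I_A (i.e., some minimal binomial generating set of I_A contains an element of A-degree b). -/
open MvPolynomial

noncomputable section

/-- The `A`-degree of a monomial exponent vector `u`. -/
def degA {m n : ℕ} (A : Fin m → Fin n → ℤ) (u : Fin m →₀ ℕ) : Fin n → ℤ :=
  ∑ i, (u i : ℤ) • A i

/-- The affine semigroup `ℕA` is pointed. -/
def IsPointed {m n : ℕ} (A : Fin m → Fin n → ℤ) : Prop :=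
  ∀ u v : Fin m →₀ ℕ, degA A u + degA A v = 0 → degA A u = 0

/-- The toric ideal `I_A`. -/
def toricIdeal (K : Type*) [Field K] {m n : ℕ} (A : Fin m → Fin n → ℤ) :
    Ideal (MvPolynomial (Fin m) K) :=
  Ideal.span {f | ∃ u v : Fin m →₀ ℕ, degA A u = degA A v ∧
    f = monomial u (1 : K) - monomial v 1}

/-- `b` belongs to the affine semigroup `ℕA`. -/
def inNA {m n : ℕ} (A : Fin m → Fin n → ℤ) (b : Fin n → ℤ) : Prop :=
  ∃ u : Fin m →₀ ℕ, degA A u = b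

/-- `c` is strictly smaller than `b` in the natural partial order on `ℕA`. -/
def ltA {m n : ℕ} (A : Fin m → Fin n → ℤ) (c b : Fin n → ℤ) : Prop :=
  (∃ e, inNA A e ∧ b = c + e) ∧ c ≠ b

/-- The ideal `I_{A,b}` generated by binomials of `A`-degree strictly less than `b`. -/
def subIdeal (K : Type*) [Field K] {m n : ℕ} (A : Fin m → Fin n → ℤ) (b : Fin n → ℤ) :
    Ideal (MvPolynomial (Fin m) K) :=
  Ideal.span {f | ∃ u v : Fin m →₀ ℕ, degA A u = degA A v ∧ ltA A (degA A u) b ∧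
    f = monomial u (1 : K) - monomial v 1}

/-- The graph `G(b)` on the fiber `deg_A^{-1}(b)`. -/
def fiberGraph (K : Type*) [Field K] {m n : ℕ} (A : Fin m → Fin n → ℤ) (b : Fin n → ℤ) :
    SimpleGraph {u : Fin m →₀ ℕ // degA A u = b} where
  Adj x y := x ≠ y ∧ monomial x.1 (1 : K) - monomial y.1 1 ∈ subIdeal K A b
  symm := by
    constructor
    rintro x y ⟨hne, hmem⟩
    exact ⟨hne.symm, by simpa [neg_sub] using neg_mem hmem⟩
  loopless := ⟨fun x h => h.1 rfl⟩

/-- A set of binomials of `I_A`. -/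
def IsBinomialSet (K : Type*) [Field K] {m n : ℕ} (A : Fin m → Fin n → ℤ)
    (S : Set (MvPolynomial (Fin m) K)) : Prop :=
  ∀ f ∈ S, ∃ u v : Fin m →₀ ℕ, degA A u = degA A v ∧ f = monomial u (1 : K) - monomial v 1

/-- A minimal system of binomial generators of `I_A`. -/
def IsMinimalGenSet (K : Type*) [Field K] {m n : ℕ} (A : Fin m → Fin n → ℤ)
    (S : Set (MvPolynomial (Fin m) K)) : Prop :=
  IsBinomialSet K A S ∧ Ideal.span S = toricIdeal K A ∧
    ∀ T : Set (MvPolynomial (Fin m) K), T ⊂ S → Ideal.span T ≠ toricIdeal K A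

/-- `b` is a Betti `A`-degree. -/
def IsBettiDegree (K : Type*) [Field K] {m n : ℕ} (A : Fin m → Fin n → ℤ)
    (b : Fin n → ℤ) : Prop :=
  ∃ S, IsMinimalGenSet K A S ∧ ∃ u v : Fin m →₀ ℕ, degA A u = b ∧ degA A v = b ∧
    monomial u (1 : K) - monomial v 1 ∈ S

/-- `b` is the `A`-degree of a nonzero binomial of `I_A`. -/
def IsBinomialDegree {m n : ℕ} (A : Fin m → Fin n → ℤ) (b : Fin n → ℤ) : Prop :=
  ∃ u v : Fin m →₀ ℕ, u ≠ v ∧ degA A u = b ∧ degA A v = b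

/-- `b` is a minimal binomial `A`-degree. -/
def IsMinimalBinomialDegree {m n : ℕ} (A : Fin m → Fin n → ℤ) (b : Fin n → ℤ) : Prop :=
  IsBinomialDegree A b ∧ ∀ c, IsBinomialDegree A c → ¬ ltA A c b

/-- An indispensable binomial of `I_A`: it belongs, up to sign, to every binomial
generating set of `I_A`. -/
def IsIndispensableBinomial (K : Type*) [Field K] {m n : ℕ} (A : Fin m → Fin n → ℤ)
    (f : MvPolynomial (Fin m) K) : Prop :=
  f ∈ toricIdeal K A ∧
    ∀ S, IsBinomialSet K A S → Ideal.span S = toricIdeal K A → f ∈ S ∨ -f ∈ S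

/-- The number of minimal systems of binomial generators of `I_A`, where the
sign of a binomial does not count (a system is recorded as the set of its
sign-pairs `{f, -f}`). -/
def nuIA (K : Type*) [Field K] {m n : ℕ} (A : Fin m → Fin n → ℤ) : ℕ :=
  Set.ncard {U : Set (Set (MvPolynomial (Fin m) K)) |
    ∃ S, IsMinimalGenSet K A S ∧ U = (fun f => ({f, -f} : Set (MvPolynomial (Fin m) K))) '' S}

/-- The number of elements of `A`-degree `b` in the generating set `S`. -/
def betti0 (K : Type*) [Field K] {m n : ℕ} (A : Fin m → Fin n → ℤ)
    (S : Set (MvPolynomial (Fin m) K)) (b : Fin n → ℤ) : ℕ :=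
  Set.ncard {f ∈ S | ∃ u v : Fin m →₀ ℕ, degA A u = b ∧ degA A v = b ∧
    f = monomial u (1 : K) - monomial v 1}

/-- The set of exponents of monomials of the monomial ideal `M_A`. -/
def MAset {m n : ℕ} (A : Fin m → Fin n → ℤ) : Set (Fin m →₀ ℕ) :=
  {u | ∃ v : Fin m →₀ ℕ, v ≠ u ∧ degA A v = degA A u}

/-- The minimal monomial generating set `T_A` of `M_A` (monomials of `M_A`
minimal under divisibility). -/
def TA {m n : ℕ} (A : Fin m → Fin n → ℤ) : Set (Fin m →₀ ℕ) :=
  {u ∈ MAset A | ∀ w ∈ MAset A, (∀ i, w i ≤ u i) → w = u}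

section AuxProof

variable {K : Type*} [Field K] {m n : ℕ} {A : Fin m → Fin n → ℤ}

lemma degA_add (u v : Fin m →₀ ℕ) : degA A (u + v) = degA A u + degA A v := by
  unfold degA
  rw [← Finset.sum_add_distrib]
  apply Finset.sum_congr rfl
  intro i _
  have h : (((u + v) i : ℕ) : ℤ) = (u i : ℤ) + (v i : ℤ) := by simp
  rw [h, add_smul]

lemma weight_degA (u : Fin m →₀ ℕ) : (Finsupp.weight A) u = degA A u := by
  rw [Finsupp.weight_apply, Finsupp.sum_fintype]
  · exact Finset.sum_congr rfl fun i _ => (Nat.cast_smul_eq_nsmul ℤ (u i) (A i)).symm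
  · intro i; exact zero_smul ℕ (A i)

lemma support_binomial_subset (u v : Fin m →₀ ℕ) :
    (monomial u (1 : K) - monomial v 1).support ⊆ {u, v} := by
  classical
  intro d hd
  rw [mem_support_iff] at hd
  by_contra hdm
  simp only [Finset.mem_insert, Finset.mem_singleton] at hdm
  push_neg at hdm
  apply hd
  rw [coeff_sub, coeff_monomial, coeff_monomial, if_neg (fun h => hdm.1 h.symm),
    if_neg (fun h => hdm.2 h.symm), sub_zero]

lemma coeff_binomial_self {u v : Fin m →₀ ℕ} (h : u ≠ v) :
    coeff u (monomial u (1 : K) - monomial v 1) = 1 := by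
  classical
  rw [coeff_sub, coeff_monomial, coeff_monomial, if_pos rfl, if_neg (fun hh => h hh.symm),
    sub_zero]

lemma monomial_mul_binomial (w u v : Fin m →₀ ℕ) :
    monomial w (1 : K) * (monomial u 1 - monomial v 1) =
      monomial (w + u) 1 - monomial (w + v) 1 := by
  rw [mul_sub, monomial_mul, monomial_mul, one_mul]

lemma comp_eq_self {c : Fin n → ℤ} {g : MvPolynomial (Fin m) K}
    (h : ∀ d ∈ g.support, degA A d = c) :
    weightedHomogeneousComponent A c g = g := by
  classical
  ext d
  rw [coeff_weightedHomogeneousComponent]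
  by_cases hd : coeff d g = 0
  · rw [hd]; split <;> rfl
  · rw [if_pos (by rw [weight_degA]; exact h d (mem_support_iff.mpr hd))]

lemma comp_eq_zero {c : Fin n → ℤ} {g : MvPolynomial (Fin m) K}
    (h : ∀ d ∈ g.support, degA A d ≠ c) :
    weightedHomogeneousComponent A c g = 0 := by
  classical
  ext d
  rw [coeff_weightedHomogeneousComponent, coeff_zero]
  split
  · rename_i hw
    by_contra hne
    exact h d (mem_support_iff.mpr hne) (by rw [← weight_degA]; exact hw)
  · rfl

lemma mem_spanK_monomial_mul {S : Set (MvPolynomial (Fin m) K)} {g : MvPolynomial (Fin m) K}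
    (hg : g ∈ Ideal.span S) :
    g ∈ Submodule.span K {p : MvPolynomial (Fin m) K | ∃ s ∈ S, ∃ w : Fin m →₀ ℕ,
      p = monomial w 1 * s} := by
  set N := Submodule.span K {p : MvPolynomial (Fin m) K | ∃ s ∈ S, ∃ w : Fin m →₀ ℕ,
      p = monomial w 1 * s} with hN
  have hmono : ∀ (w : Fin m →₀ ℕ) (a : K) (x : MvPolynomial (Fin m) K), x ∈ N →
      monomial w a * x ∈ N := by
    intro w a x hx
    induction hx using Submodule.span_induction with
    | mem p hp =>
      obtain ⟨s, hs, w', rfl⟩ := hp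
      have he : monomial w a * (monomial w' 1 * s) = a • (monomial (w + w') 1 * s) := by
        rw [← mul_assoc, monomial_mul, mul_one, ← smul_mul_assoc, smul_monomial, smul_eq_mul,
          mul_one]
      rw [he]
      exact N.smul_mem a (Submodule.subset_span ⟨s, hs, w + w', rfl⟩)
    | zero => rw [mul_zero]; exact N.zero_mem
    | add p q _ _ hp hq => rw [mul_add]; exact N.add_mem hp hq
    | smul k p _ hp => rw [mul_smul_comm]; exact N.smul_mem k hp
  have hmul : ∀ (r x : MvPolynomial (Fin m) K), x ∈ N → r * x ∈ N := by
    intro r x hx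
    rw [r.as_sum, Finset.sum_mul]
    exact Submodule.sum_mem N fun d _ => hmono d _ x hx
  let J : Ideal (MvPolynomial (Fin m) K) :=
    { carrier := N
      add_mem' := fun h1 h2 => N.add_mem h1 h2
      zero_mem' := N.zero_mem
      smul_mem' := fun r x hx => hmul r x hx }
  have hle : Ideal.span S ≤ J := Ideal.span_le.mpr fun s hs =>
    Submodule.subset_span ⟨s, hs, 0, by rw [monomial_zero', C_1, one_mul]⟩
  exact hle hg

/-- The set of monomial multiples of binomials of `S`, of total `A`-degree `c`. -/
def Tset (K : Type*) [Field K] {m n : ℕ} (A : Fin m → Fin n → ℤ)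
    (S : Set (MvPolynomial (Fin m) K)) (c : Fin n → ℤ) : Set (MvPolynomial (Fin m) K) :=
  {p | ∃ u v w : Fin m →₀ ℕ, (monomial u (1 : K) - monomial v 1) ∈ S ∧
    degA A u = degA A v ∧ degA A w + degA A u = c ∧
    p = monomial w 1 * (monomial u 1 - monomial v 1)}

lemma mem_spanK_Tset {S : Set (MvPolynomial (Fin m) K)} (hS : IsBinomialSet K A S)
    {g : MvPolynomial (Fin m) K} (hg : g ∈ Ideal.span S) {c : Fin n → ℤ}
    (hgc : ∀ d ∈ g.support, degA A d = c) :
    g ∈ Submodule.span K (Tset K A S c) := by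
  classical
  have h0 := mem_spanK_monomial_mul hg
  have h1 := Submodule.apply_mem_span_image_of_mem_span
    (weightedHomogeneousComponent A c) h0
  rw [comp_eq_self hgc] at h1
  have himg : (weightedHomogeneousComponent A c) ''
      {p : MvPolynomial (Fin m) K | ∃ s ∈ S, ∃ w : Fin m →₀ ℕ, p = monomial w 1 * s}
      ⊆ insert 0 (Tset K A S c) := by
    rintro _ ⟨p, ⟨s, hs, w, rfl⟩, rfl⟩
    obtain ⟨u, v, huv, rfl⟩ := hS s hs
    by_cases hdeg : degA A w + degA A u = c
    · refine Set.mem_insert_iff.mpr (Or.inr ⟨u, v, w, hs, huv, hdeg, ?_⟩)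
      apply comp_eq_self
      intro d hd
      rw [monomial_mul_binomial] at hd
      rcases Finset.mem_insert.mp (support_binomial_subset (w + u) (w + v) hd) with h' | h'
      · rw [h', degA_add]; exact hdeg
      · rw [Finset.mem_singleton] at h'
        rw [h', degA_add, ← huv]; exact hdeg
    · refine Set.mem_insert_iff.mpr (Or.inl ?_)
      apply comp_eq_zero
      intro d hd
      rw [monomial_mul_binomial] at hd
      rcases Finset.mem_insert.mp (support_binomial_subset (w + u) (w + v) hd) with h' | h'
      · rw [h', degA_add]; exact hdeg
      · rw [Finset.mem_singleton] at h'
        rw [h', degA_add, ← huv]; exact hdeg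
  have h2 := Submodule.span_mono himg h1
  rwa [Submodule.span_insert_zero] at h2

lemma reachable_mem_subIdeal {b : Fin n → ℤ} {x y : {u : Fin m →₀ ℕ // degA A u = b}}
    (h : (fiberGraph K A b).Reachable x y) :
    monomial x.1 (1 : K) - monomial y.1 1 ∈ subIdeal K A b := by
  obtain ⟨w⟩ := h
  induction w with
  | nil => rw [sub_self]; exact (subIdeal K A b).zero_mem
  | @cons p q r hadj _ ih =>
    have h1 : monomial p.1 (1 : K) - monomial r.1 1 =
        (monomial p.1 1 - monomial q.1 1) + (monomial q.1 1 - monomial r.1 1) := by ring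
    rw [h1]
    exact (subIdeal K A b).add_mem hadj.2 ih

lemma exists_minimal_genset (K : Type*) [Field K] {m n : ℕ} (A : Fin m → Fin n → ℤ) :
    ∃ S : Set (MvPolynomial (Fin m) K), IsMinimalGenSet K A S := by
  classical
  set B : Set (MvPolynomial (Fin m) K) := {f | ∃ u v : Fin m →₀ ℕ,
    degA A u = degA A v ∧ f = monomial u (1 : K) - monomial v 1} with hB
  have hBspan : Ideal.span B = toricIdeal K A := rfl
  -- a finite binomial generating set
  obtain ⟨t0, ht0⟩ : (toricIdeal K A).FG := IsNoetherian.noetherian (toricIdeal K A)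
  have key : ∀ x ∈ t0, ∃ t' : Finset (MvPolynomial (Fin m) K), (↑t' : Set _) ⊆ B ∧
      x ∈ Ideal.span (↑t' : Set (MvPolynomial (Fin m) K)) := by
    intro x hx
    have hxB : x ∈ Submodule.span (MvPolynomial (Fin m) K) B := by
      rw [show Submodule.span (MvPolynomial (Fin m) K) B = Ideal.span B from rfl, hBspan, ← ht0]
      exact Ideal.subset_span hx
    exact Submodule.mem_span_finite_of_mem_span hxB
  choose F hF1 hF2 using key
  set t : Finset (MvPolynomial (Fin m) K) := t0.attach.biUnion (fun x => F x.1 x.2) with ht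
  have htB : (↑t : Set _) ⊆ B := by
    intro x hx
    rw [ht] at hx
    simp only [Finset.coe_biUnion, Set.mem_iUnion, Finset.mem_coe] at hx
    obtain ⟨a, _, hxa⟩ := hx
    exact hF1 a.1 a.2 hxa
  have htspan : Ideal.span (↑t : Set _) = toricIdeal K A := by
    apply le_antisymm
    · rw [← hBspan]
      exact Ideal.span_mono htB
    · rw [← ht0]
      apply Ideal.span_le.mpr
      intro x hx
      have : x ∈ Ideal.span (↑(F x hx) : Set (MvPolynomial (Fin m) K)) := hF2 x hx
      refine Ideal.span_mono ?_ this
      intro y hy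
      rw [ht]
      simp only [Finset.coe_biUnion, Set.mem_iUnion, Finset.mem_coe]
      exact ⟨⟨x, hx⟩, Finset.mem_attach _ _, hy⟩
  -- shrink to a minimal generating set
  clear ht0 hF1 hF2 ht
  suffices H : ∀ (N : ℕ) (t : Finset (MvPolynomial (Fin m) K)), t.card ≤ N →
      (↑t : Set _) ⊆ B → Ideal.span (↑t : Set _) = toricIdeal K A →
      ∃ S, IsMinimalGenSet K A S from H t.card t le_rfl htB htspan
  intro N
  induction N with
  | zero =>
    intro t hc htB htspan
    have ht0 : t = ∅ := Finset.card_eq_zero.mp (Nat.le_zero.mp hc)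
    refine ⟨↑t, fun f hf => htB hf, htspan, ?_⟩
    intro T hT
    exfalso
    rw [ht0] at hT
    simp only [Finset.coe_empty] at hT
    obtain ⟨x, hx, -⟩ := Set.exists_of_ssubset hT
    exact hx
  | succ N ih =>
    intro t hc htB htspan
    by_cases hrem : ∃ g ∈ t, Ideal.span (↑(t.erase g) : Set _) = toricIdeal K A
    · obtain ⟨g, hg, hspan⟩ := hrem
      refine ih (t.erase g) ?_ (fun x hx => htB (Finset.erase_subset g t hx)) hspan
      have := Finset.card_erase_of_mem hg
      omega
    · push_neg at hrem
      refine ⟨↑t, fun f hf => htB hf, htspan, ?_⟩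
      intro T hT hTspan
      obtain ⟨g, hgt, hgT⟩ := Set.exists_of_ssubset hT
      have hgt' : g ∈ t := hgt
      have hTsub : T ⊆ (↑(t.erase g) : Set _) := by
        intro x hx
        simp only [Finset.coe_erase, Set.mem_diff, Set.mem_singleton_iff]
        exact ⟨hT.subset hx, fun h => hgT (h ▸ hx)⟩
      apply hrem g hgt'
      apply le_antisymm
      · rw [← htspan]
        exact Ideal.span_mono (by exact_mod_cast Finset.erase_subset g t)
      · rw [← hTspan]
        exact Ideal.span_mono hTsub

end AuxProof

/-- `G(b)` is disconnected if and only if `b` is a Betti `A`-degree. -/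
theorem statement1 {K : Type*} [Field K] {m n : ℕ} (A : Fin m → Fin n → ℤ)
    (hA : IsPointed A) (b : Fin n → ℤ) (hb : inNA A b) :
    ¬ (fiberGraph K A b).Preconnected ↔ IsBettiDegree K A b := by
  classical
  constructor
  · intro hncon
    obtain ⟨S, hSbin, hSspan, hSprop⟩ := exists_minimal_genset K A
    have hncon' : ¬ ∀ x y : {u : Fin m →₀ ℕ // degA A u = b},
        (fiberGraph K A b).Reachable x y := hncon
    push_neg at hncon'
    obtain ⟨x, y, hxy⟩ := hncon'
    have hne : x ≠ y := fun h => hxy (h ▸ SimpleGraph.Reachable.refl x)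
    have hnotmem : monomial x.1 (1 : K) - monomial y.1 1 ∉ subIdeal K A b :=
      fun hmem => hxy (SimpleGraph.Adj.reachable ⟨hne, hmem⟩)
    refine ⟨S, ⟨hSbin, hSspan, hSprop⟩, ?_⟩
    by_contra hEx
    apply hnotmem
    have hg : (monomial x.1 (1 : K) - monomial y.1 1) ∈ Ideal.span S := by
      rw [hSspan]
      exact Ideal.subset_span ⟨x.1, y.1, by rw [x.2, y.2], rfl⟩
    have hgc : ∀ d ∈ (monomial x.1 (1 : K) - monomial y.1 1).support, degA A d = b := by
      intro d hd
      rcases Finset.mem_insert.mp (support_binomial_subset x.1 y.1 hd) with h | h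
      · rw [h]; exact x.2
      · rw [Finset.mem_singleton] at h; rw [h]; exact y.2
    have hmem := mem_spanK_Tset hSbin hg hgc
    have hsub : Tset K A S b ⊆
        (Submodule.restrictScalars K (subIdeal K A b) : Set (MvPolynomial (Fin m) K)) := by
      rintro p ⟨u, v, w, hsS, huv, hdeg, rfl⟩
      by_cases hub : degA A u = b
      · exact absurd ⟨u, v, hub, by rw [← huv]; exact hub, hsS⟩ hEx
      · show monomial w (1 : K) * (monomial u 1 - monomial v 1) ∈ subIdeal K A b
        refine Ideal.mul_mem_left _ _ (Ideal.subset_span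
          ⟨u, v, huv, ⟨⟨degA A w, ⟨w, rfl⟩, ?_⟩, hub⟩, rfl⟩)
        linear_combination -hdeg
    exact (Submodule.span_le.mpr hsub) hmem
  · rintro ⟨S, ⟨hSbin, hSspan, hSprop⟩, uf, vf, huf, hvf, hfS⟩ hPre
    by_cases hufvf : uf = vf
    · have hf0 : monomial uf (1 : K) - monomial vf 1 = 0 := by rw [hufvf, sub_self]
      have h0S : (0 : MvPolynomial (Fin m) K) ∈ S := hf0 ▸ hfS
      refine hSprop (S \ {0}) (Set.sdiff_singleton_ssubset.mpr h0S) ?_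
      apply le_antisymm
      · rw [← hSspan]; exact Ideal.span_mono Set.diff_subset
      · rw [← hSspan]
        apply Ideal.span_le.mpr
        intro s hs
        by_cases hs0 : s = 0
        · rw [hs0]; exact (Ideal.span _).zero_mem
        · exact Ideal.subset_span ⟨hs, hs0⟩
    · set f : MvPolynomial (Fin m) K := monomial uf 1 - monomial vf 1 with hfdef
      have hreach := hPre ⟨uf, huf⟩ ⟨vf, hvf⟩
      have hfsub : f ∈ subIdeal K A b := by
        rw [hfdef]
        exact reachable_mem_subIdeal (K := K) (A := A) (b := b)
          (x := ⟨uf, huf⟩) (y := ⟨vf, hvf⟩) hreach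
      have hfne : f ≠ 0 := by
        intro h0
        have hc : coeff uf f = 0 := by rw [h0]; exact coeff_zero uf
        rw [hfdef, coeff_binomial_self hufvf] at hc
        exact one_ne_zero hc
      have hsubid : subIdeal K A b ≤ Ideal.span (S \ {f}) := by
        apply Ideal.span_le.mpr
        rintro g ⟨p, q, hpq, hlt, rfl⟩
        have hgI : (monomial p (1 : K) - monomial q 1) ∈ Ideal.span S := by
          rw [hSspan]; exact Ideal.subset_span ⟨p, q, hpq, rfl⟩
        have hgc : ∀ d ∈ (monomial p (1 : K) - monomial q 1).support,
            degA A d = degA A p := by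
          intro d hd
          rcases Finset.mem_insert.mp (support_binomial_subset p q hd) with h | h
          · rw [h]
          · rw [Finset.mem_singleton] at h; rw [h, hpq]
        have hmem := mem_spanK_Tset hSbin hgI hgc
        have hsub2 : Tset K A S (degA A p) ⊆
            (Submodule.restrictScalars K (Ideal.span (S \ {f})) :
              Set (MvPolynomial (Fin m) K)) := by
          rintro x ⟨u, v, w, hsS, huv, hdeg, rfl⟩
          by_cases hsf : monomial u (1 : K) - monomial v 1 = f
          · exfalso
            have huvne : u ≠ v := by
              intro h
              apply hfne
              rw [← hsf, h, sub_self]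
            have hufold : u ∈ f.support := by
              rw [← hsf, mem_support_iff, coeff_binomial_self huvne]
              exact one_ne_zero
            have hub : degA A u = b := by
              rw [hfdef] at hufold
              rcases Finset.mem_insert.mp (support_binomial_subset uf vf hufold) with h | h
              · rw [h]; exact huf
              · rw [Finset.mem_singleton] at h; rw [h]; exact hvf
            obtain ⟨⟨e, ⟨z, hz⟩, hbe⟩, hcb⟩ := hlt
            have h0 : degA A w + degA A z = 0 := by
              linear_combination hdeg - hub + hz - hbe
            have hw0 := hA w z h0
            have hz0 : degA A z = 0 := by linear_combination h0 - hw0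
            apply hcb
            linear_combination -hbe + hz - hz0
          · show monomial w (1 : K) * (monomial u 1 - monomial v 1) ∈ Ideal.span (S \ {f})
            exact Ideal.mul_mem_left _ _ (Ideal.subset_span ⟨hsS, hsf⟩)
        exact (Submodule.span_le.mpr hsub2) hmem
      have hfinal : Ideal.span (S \ {f}) = toricIdeal K A := by
        apply le_antisymm
        · rw [← hSspan]; exact Ideal.span_mono Set.diff_subset
        · rw [← hSspan]
          apply Ideal.span_le.mpr
          intro s hs
          by_cases hsf : s = f
          · rw [hsf]; exact hsubid hfsub
          · exact Ideal.subset_span ⟨hs, hsf⟩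
      exact hSprop (S \ {f}) (Set.sdiff_singleton_ssubset.mpr hfS) hfinal
end
end

section
/- If the toric ideal I_A is generated by its indispensable binomials, then no two elements of a minimal generating set of I_A have the same A-degree. -/
open MvPolynomial

noncomputable section

section Aux

variable {K : Type*} [Field K] {m n : ℕ}

lemma binomial_mem_toric (A : Fin m → Fin n → ℤ) {u v : Fin m →₀ ℕ}
    (h : degA A u = degA A v) :
    monomial u (1 : K) - monomial v 1 ∈ toricIdeal K A :=
  Ideal.subset_span ⟨u, v, h, rfl⟩

lemma zero_not_mem_minGenSet {A : Fin m → Fin n → ℤ}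
    {S : Set (MvPolynomial (Fin m) K)} (hS : IsMinimalGenSet K A S) :
    (0 : MvPolynomial (Fin m) K) ∉ S := by
  intro h0
  refine hS.2.2 (S \ {0}) (Set.sdiff_singleton_ssubset.mpr h0) ?_
  rw [← hS.2.1]
  refine le_antisymm (Ideal.span_mono Set.diff_subset) (Ideal.span_le.mpr fun s hs => ?_)
  by_cases hzero : s = 0
  · simp [hzero]
  · exact Ideal.subset_span ⟨hs, hzero⟩

lemma neg_mem_minGenSet {A : Fin m → Fin n → ℤ}
    {S : Set (MvPolynomial (Fin m) K)} (hS : IsMinimalGenSet K A S)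
    {x : MvPolynomial (Fin m) K} (hx : x ∈ S) (hnx : -x ∈ S) : -x = x := by
  by_contra hne
  refine hS.2.2 (S \ {x}) (Set.sdiff_singleton_ssubset.mpr hx) ?_
  rw [← hS.2.1]
  refine le_antisymm (Ideal.span_mono Set.diff_subset) (Ideal.span_le.mpr fun s hs => ?_)
  by_cases hsx : s = x
  · have : -x ∈ Ideal.span (S \ {x}) := Ideal.subset_span ⟨hnx, hne⟩
    have := (Ideal.span (S \ {x})).neg_mem this
    simpa [hsx] using this
  · exact Ideal.subset_span ⟨hs, hsx⟩

lemma mem_minGenSet_indisp {A : Fin m → Fin n → ℤ}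
    (hgen : Ideal.span {f | IsIndispensableBinomial K A f} = toricIdeal K A)
    {S : Set (MvPolynomial (Fin m) K)} (hS : IsMinimalGenSet K A S)
    {g : MvPolynomial (Fin m) K} (hg : g ∈ S) :
    IsIndispensableBinomial K A g ∨ IsIndispensableBinomial K A (-g) := by
  obtain ⟨hbin, hspan, hmin⟩ := hS
  set S₀ : Set (MvPolynomial (Fin m) K) :=
    {s ∈ S | IsIndispensableBinomial K A s ∨ IsIndispensableBinomial K A (-s)} with hS₀
  have hsub : S₀ ⊆ S := fun s hs => hs.1
  have hspan0 : Ideal.span S₀ = toricIdeal K A := by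
    refine le_antisymm (by rw [← hspan]; exact Ideal.span_mono hsub) ?_
    rw [← hgen]
    refine Ideal.span_le.mpr fun h hh => ?_
    rcases hh.2 S hbin hspan with hhS | hhS
    · exact Ideal.subset_span ⟨hhS, Or.inl hh⟩
    · have hmem : -h ∈ S₀ := ⟨hhS, Or.inr (by simpa using hh)⟩
      have := (Ideal.span S₀).neg_mem (Ideal.subset_span hmem)
      simpa using this
  have hEq : S₀ = S := by
    by_contra hne
    exact hmin S₀ ⟨hsub, fun h => hne (le_antisymm hsub h)⟩ hspan0
  have : g ∈ S₀ := hEq.symm ▸ hg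
  exact this.2

end Aux

/-- If `I_A` is generated by its indispensable binomials then no two elements of
a minimal generating set have the same `A`-degree. -/
theorem statement13 {K : Type*} [Field K] {m n : ℕ} (A : Fin m → Fin n → ℤ)
    (hA : IsPointed A)
    (hgen : Ideal.span {f | IsIndispensableBinomial K A f} = toricIdeal K A)
    (S : Set (MvPolynomial (Fin m) K)) (hS : IsMinimalGenSet K A S) :
    ∀ f ∈ S, ∀ g ∈ S, ∀ b : Fin n → ℤ,
      (∃ u v : Fin m →₀ ℕ, degA A u = b ∧ degA A v = b ∧
        f = monomial u (1 : K) - monomial v 1) →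
      (∃ u v : Fin m →₀ ℕ, degA A u = b ∧ degA A v = b ∧
        g = monomial u (1 : K) - monomial v 1) →
      f = g := by
  intro f hf g hg b hfb hgb
  by_contra hfg
  obtain ⟨u, v, hub, hvb, hfdef⟩ := hfb
  obtain ⟨w, z, hwb, hzb, hgdef⟩ := hgb
  have h0 := zero_not_mem_minGenSet hS
  have hf0 : f ≠ 0 := fun h => h0 (h ▸ hf)
  have hg0 : g ≠ 0 := fun h => h0 (h ▸ hg)
  have huv : u ≠ v := by
    intro h; exact hf0 (by rw [hfdef, h, sub_self])
  have hwz : w ≠ z := by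
    intro h; exact hg0 (by rw [hgdef, h, sub_self])
  -- choose c ∈ {u, v} with c ∉ {w, z}
  obtain ⟨c, hcb, hcw, hcz⟩ :
      ∃ c : Fin m →₀ ℕ, degA A c = b ∧ c ≠ w ∧ c ≠ z := by
    by_cases huw : u = w
    · refine ⟨v, hvb, fun h => huv (huw.trans h.symm), fun h => ?_⟩
      exact hfg (by rw [hfdef, hgdef, huw, h])
    · by_cases huz : u = z
      · refine ⟨v, hvb, fun h => ?_, fun h => huv (huz.trans h.symm)⟩
        -- then f = -g, contradiction with minimality
        have hfneg : f = -g := by rw [hfdef, hgdef, huz, h]; ring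
        have : -g ∈ S := hfneg ▸ hf
        have := neg_mem_minGenSet hS hg this
        exact hfg (by rw [hfneg, this])
      · exact ⟨u, hub, huw, huz⟩
  set h₁ : MvPolynomial (Fin m) K := monomial w 1 - monomial c 1 with hh₁
  set h₂ : MvPolynomial (Fin m) K := monomial c 1 - monomial z 1 with hh₂
  have hgh₁ : g ≠ h₁ := by
    intro h
    have : monomial z (1 : K) = monomial c 1 := by
      have h' : monomial w (1 : K) - monomial z 1 = monomial w 1 - monomial c 1 := hgdef ▸ h
      linear_combination -h'
    exact hcz (MvPolynomial.monomial_left_injective one_ne_zero this).symm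
  have hgh₂ : g ≠ h₂ := by
    intro h
    have h' : monomial w (1 : K) = monomial c 1 := by
      have h'' : monomial w (1 : K) - monomial z 1 = monomial c 1 - monomial z 1 := hgdef ▸ h
      linear_combination h''
    exact hcw (MvPolynomial.monomial_left_injective one_ne_zero h').symm
  have hngh₁ : -g ≠ h₁ := by
    intro h
    have hco := congrArg (MvPolynomial.coeff w) (hgdef ▸ h)
    have hne1 : (-1 : K) = 1 := by
      simpa [hh₁, MvPolynomial.coeff_monomial, hwz.symm, hcw] using hco
    have : -g = g := by
      calc -g = (-1 : K) • g := (neg_one_smul K g).symm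
        _ = (1 : K) • g := by rw [hne1]
        _ = g := one_smul _ _
    exact hgh₁ (this ▸ h)
  have hngh₂ : -g ≠ h₂ := by
    intro h
    have hco := congrArg (MvPolynomial.coeff z) (hgdef ▸ h)
    have hne1 : (-1 : K) = 1 := by
      simpa [hh₂, MvPolynomial.coeff_monomial, hwz, hcz] using hco.symm
    have : -g = g := by
      calc -g = (-1 : K) • g := (neg_one_smul K g).symm
        _ = (1 : K) • g := by rw [hne1]
        _ = g := one_smul _ _
    exact hgh₂ (this ▸ h)
  set T : Set (MvPolynomial (Fin m) K) := insert h₁ (insert h₂ (S \ {g})) with hT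
  obtain ⟨hbin, hspan, hmin⟩ := hS
  have hTbin : IsBinomialSet K A T := by
    rintro t (rfl | rfl | ⟨htS, -⟩)
    · exact ⟨w, c, by rw [hwb, hcb], rfl⟩
    · exact ⟨c, z, by rw [hcb, hzb], rfl⟩
    · exact hbin t htS
  have hTspan : Ideal.span T = toricIdeal K A := by
    refine le_antisymm (Ideal.span_le.mpr ?_) ?_
    · rintro t (rfl | rfl | ⟨htS, -⟩)
      · exact binomial_mem_toric A (by rw [hwb, hcb])
      · exact binomial_mem_toric A (by rw [hcb, hzb])
      · rw [← hspan]; exact Ideal.subset_span htS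
    · rw [← hspan]
      refine Ideal.span_le.mpr fun s hs => ?_
      by_cases hsg : s = g
      · have hgsum : g = h₁ + h₂ := by rw [hgdef, hh₁, hh₂]; ring
        rw [hsg, hgsum]
        exact add_mem (Ideal.subset_span (Set.mem_insert _ _))
          (Ideal.subset_span (Set.mem_insert_of_mem _ (Set.mem_insert _ _)))
      · exact Ideal.subset_span (Set.mem_insert_of_mem _
          (Set.mem_insert_of_mem _ ⟨hs, hsg⟩))
  have hind := mem_minGenSet_indisp hgen ⟨hbin, hspan, hmin⟩ hg
  have hdisj : g ∈ T ∨ -g ∈ T := by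
    rcases hind with h | h
    · exact h.2 T hTbin hTspan
    · rcases h.2 T hTbin hTspan with h' | h'
      · exact Or.inr h'
      · exact Or.inl (by simpa using h')
  rcases hdisj with (rfl | rfl | ⟨hmem, hne⟩) | (h' | h' | ⟨hmem, hne⟩)
  · exact hgh₁ rfl
  · exact hgh₂ rfl
  · exact hne rfl
  · exact hngh₁ h'
  · exact hngh₂ h'
  · have := neg_mem_minGenSet ⟨hbin, hspan, hmin⟩ hg hmem
    exact hne this
end
end

section
/- The indispensable monomials of I_A are precisely the elements of the minimal monomial generating set T_A of the monomial ideal M_A generated by all monomials x^u for which there exists v ≠ u with x^u - x^v ∈ I_A. -/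
open MvPolynomial

noncomputable section

/-- A monomial is indispensable if every binomial generating set of `I_A`
contains a binomial of which it is a monomial. -/
def IsIndispensableMonomial (K : Type*) [Field K] {m n : ℕ} (A : Fin m → Fin n → ℤ)
    (u : Fin m →₀ ℕ) : Prop :=
  ∀ S, IsBinomialSet K A S → Ideal.span S = toricIdeal K A →
    ∃ f ∈ S, ∃ v : Fin m →₀ ℕ,
      f = monomial u (1 : K) - monomial v 1 ∨ f = monomial v (1 : K) - monomial u 1

section Helpers
variable {K : Type*} [Field K] {m n : ℕ} {A : Fin m → Fin n → ℤ}

lemma degA_zero : degA A (0 : Fin m →₀ ℕ) = 0 := by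
  unfold degA; simp

lemma coeff_binom (a b t : Fin m →₀ ℕ) :
    coeff t (monomial a (1 : K) - monomial b 1) =
      (if a = t then (1:K) else 0) - (if b = t then 1 else 0) := by
  rw [coeff_sub, coeff_monomial, coeff_monomial]

lemma binom_ne_zero {a b : Fin m →₀ ℕ} (hab : a ≠ b) :
    monomial a (1 : K) - monomial b 1 ≠ 0 := by
  intro h
  have := coeff_binom (K := K) a b a
  rw [h, coeff_zero, if_pos rfl, if_neg (fun hh => hab hh.symm)] at this
  simpa using this.symm

lemma eq_of_binom_eq {u v a b : Fin m →₀ ℕ} (hab : a ≠ b)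
    (h : monomial u (1 : K) - monomial v 1 = monomial a 1 - monomial b 1) :
    (u = a ∧ v = b) ∨ (u = b ∧ v = a) := by
  have huv : u ≠ v := by
    intro he; subst he
    exact binom_ne_zero hab (by rw [← h]; ring)
  have hu := congrArg (coeff u) h
  have hv := congrArg (coeff v) h
  rw [coeff_binom, coeff_binom, if_pos rfl, if_neg (fun hh => huv hh.symm)] at hu
  rw [coeff_binom, coeff_binom, if_pos rfl, if_neg huv] at hv
  -- hu : 1 - 0 = (if a = u ..) - (if b = u ..), hv : 0 - 1 = ...
  by_cases hau : a = u
  · subst hau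
    left
    refine ⟨rfl, ?_⟩
    by_cases hbv : b = v
    · exact hbv.symm
    · exfalso
      rw [if_neg hbv] at hv
      by_cases hav : a = v
      · exact huv hav
      · rw [if_neg hav] at hv; simpa using hv
  · right
    rw [if_neg hau] at hu
    by_cases hbu : b = u
    · refine ⟨hbu.symm, ?_⟩
      -- hu : 1 = -1, char 2 case; need v = a
      by_cases hav : a = v
      · exact hav.symm
      · exfalso
        rw [if_neg hav] at hv
        by_cases hbv : b = v
        · exact huv (hbu.symm.trans hbv)
        · rw [if_neg hbv] at hv; simpa using hv
    · exfalso
      rw [if_neg hbu] at hu; simpa using hu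

/-- Extraction: any element of the span of a set of binomials with nonzero
coefficient at `t` yields a binomial in the set one of whose exponents is `≤ t`. -/
lemma key_extraction {S : Set (MvPolynomial (Fin m) K)}
    (hS : ∀ f ∈ S, ∃ a b : Fin m →₀ ℕ, degA A a = degA A b ∧
      f = monomial a (1 : K) - monomial b 1)
    {f : MvPolynomial (Fin m) K} (hf : f ∈ Ideal.span S)
    {t : Fin m →₀ ℕ} (ht : coeff t f ≠ 0) :
    ∃ a b : Fin m →₀ ℕ, a ≠ b ∧ degA A a = degA A b ∧
      (monomial a (1 : K) - monomial b 1) ∈ S ∧ (a ≤ t ∨ b ≤ t) := by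
  induction hf using Submodule.span_induction generalizing t with
  | mem x hx =>
    obtain ⟨a, b, hdeg, rfl⟩ := hS x hx
    have hab : a ≠ b := by
      intro he; subst he; simp at ht
    have : a = t ∨ b = t := by
      by_contra hc
      push_neg at hc
      rw [coeff_binom, if_neg hc.1, if_neg hc.2] at ht
      simp at ht
    refine ⟨a, b, hab, hdeg, hx, ?_⟩
    rcases this with h | h
    · exact Or.inl (le_of_eq h)
    · exact Or.inr (le_of_eq h)
  | zero => simp at ht
  | add x y hx hy ihx ihy =>
    rw [coeff_add] at ht
    by_cases hcx : coeff t x = 0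
    · exact ihy (by intro h; rw [hcx, h] at ht; simp at ht)
    · exact ihx hcx
  | smul r x hx ih =>
    rw [smul_eq_mul, coeff_mul] at ht
    obtain ⟨⟨p, q⟩, hpq, hne⟩ := Finset.exists_ne_zero_of_sum_ne_zero ht
    rw [Finset.HasAntidiagonal.mem_antidiagonal] at hpq
    have hq : coeff q x ≠ 0 := fun h => hne (by simp [h])
    obtain ⟨a, b, hab, hdeg, hmem, hle⟩ := ih hq
    have hqt : q ≤ t := hpq ▸ le_add_self
    exact ⟨a, b, hab, hdeg, hmem, hle.imp (fun h => h.trans hqt) (fun h => h.trans hqt)⟩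

end Helpers

/-- The indispensable monomials of `I_A` are precisely the minimal monomial
generators of `M_A`. -/
theorem statement16 {K : Type*} [Field K] {m n : ℕ} (A : Fin m → Fin n → ℤ)
    (hA : IsPointed A) (u : Fin m →₀ ℕ) :
    IsIndispensableMonomial K A u ↔ u ∈ TA A := by
  constructor
  · -- indispensable → u ∈ TA
    intro hind
    -- Step A: u ∈ MAset A
    have hMA : u ∈ MAset A := by
      set S₀ : Set (MvPolynomial (Fin m) K) :=
        {f | ∃ a b : Fin m →₀ ℕ, degA A a = degA A b ∧ a ≠ b ∧
          f = monomial a (1 : K) - monomial b 1} with hS₀def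
      have hBS₀ : IsBinomialSet K A S₀ := by
        rintro f ⟨a, b, hd, -, hf⟩
        exact ⟨a, b, hd, hf⟩
      have hspan₀ : Ideal.span S₀ = toricIdeal K A := by
        apply le_antisymm
        · apply Ideal.span_le.2
          rintro f ⟨a, b, hd, -, hf⟩
          exact Ideal.subset_span ⟨a, b, hd, hf⟩
        · apply Ideal.span_le.2
          rintro f ⟨a, b, hd, rfl⟩
          by_cases hab : a = b
          · subst hab
            rw [sub_self]
            exact zero_mem _
          · exact Ideal.subset_span ⟨a, b, hd, hab, rfl⟩
      obtain ⟨f, hfS, v, hf⟩ := hind S₀ hBS₀ hspan₀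
      obtain ⟨a, b, hd, hab, rfl⟩ := hfS
      rcases hf with hf | hf
      · rcases eq_of_binom_eq hab hf.symm with ⟨h1, h2⟩ | ⟨h1, h2⟩
        · exact ⟨v, by rw [h1, h2]; exact Ne.symm hab, by rw [h1, h2]; exact hd.symm⟩
        · exact ⟨v, by rw [h1, h2]; exact hab, by rw [h1, h2]; exact hd⟩
      · rcases eq_of_binom_eq hab hf.symm with ⟨h1, h2⟩ | ⟨h1, h2⟩
        · exact ⟨v, by rw [h1, h2]; exact hab, by rw [h1, h2]; exact hd⟩
        · exact ⟨v, by rw [h1, h2]; exact Ne.symm hab, by rw [h1, h2]; exact hd.symm⟩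
    refine ⟨hMA, ?_⟩
    intro w hw hwle
    by_contra hne
    have hule : w ≤ u := Finsupp.le_def.2 hwle
    -- the claim: a suitable pair (w₀, w₁)
    have claim : ∃ w₀ w₁ : Fin m →₀ ℕ, w₀ ≤ u ∧ w₀ ≠ u ∧ w₁ ≠ w₀ ∧ w₁ ≠ u ∧
        degA A w₀ = degA A w₁ := by
      obtain ⟨w', hw'ne, hw'deg⟩ := hw
      by_cases hw'u : w' = u
      · rw [hw'u] at hw'deg
        have hcw : w + (u - w) = u := add_tsub_cancel_of_le hule
        have hdc : degA A (u - w) = 0 := by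
          have h1 : degA A w + degA A (u - w) = degA A u := by rw [← degA_add, hcw]
          rw [hw'deg] at h1
          exact add_eq_left.1 h1
        have hc0 : (u - w) ≠ 0 := fun h => hne (by rw [← hcw, h, add_zero])
        have hu0 : u ≠ 0 := by
          intro h
          apply hne
          have : w ≤ 0 := h ▸ hule
          rw [le_antisymm this (zero_le), h]
        by_cases hcu : (u - w) = u
        · -- w = 0, degA u = 0
          have hdu : degA A u = 0 := hcu ▸ hdc
          obtain ⟨i, hi⟩ := Finsupp.support_nonempty_iff.2 hu0
          have hsle : Finsupp.single i 1 ≤ u := by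
            rw [Finsupp.single_le_iff]
            exact Nat.one_le_iff_ne_zero.2 (Finsupp.mem_support_iff.1 hi)
          have hds : degA A (Finsupp.single i 1) = 0 := by
            apply hA _ (u - Finsupp.single i 1)
            rw [← degA_add, add_tsub_cancel_of_le hsle, hdu]
          by_cases hsu : Finsupp.single i 1 = u
          · have hd2 : degA A (Finsupp.single i (2 : ℕ)) = 0 := by
              have h2 : (Finsupp.single i (2 : ℕ)) =
                  Finsupp.single i 1 + Finsupp.single i 1 := by
                rw [← Finsupp.single_add]
              rw [h2, degA_add, hds, add_zero]
            refine ⟨0, Finsupp.single i 2, zero_le, fun h => hu0 h.symm, by simp, ?_,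
              by rw [degA_zero, hd2]⟩
            rw [← hsu]
            intro h
            have := DFunLike.congr_fun h i
            simp at this
          · exact ⟨0, Finsupp.single i 1, zero_le, fun h => hu0 h.symm, by simp, hsu,
              by rw [degA_zero, hds]⟩
        · exact ⟨0, u - w, zero_le, fun h => hu0 h.symm, hc0, hcu,
            by rw [degA_zero, hdc]⟩
      · exact ⟨w, w', hule, hne, hw'ne, hw'u, hw'deg.symm⟩
    obtain ⟨w₀, w₁, h0le, h0ne, h10, h1u, hdeg01⟩ := claim
    set D : Set (MvPolynomial (Fin m) K) :=
      {f | ∃ a b : Fin m →₀ ℕ, degA A a = degA A b ∧ a ≠ b ∧ a ≠ u ∧ b ≠ u ∧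
        f = monomial a (1 : K) - monomial b 1} with hDdef
    have hBSD : IsBinomialSet K A D := by
      rintro f ⟨a, b, hd, -, -, -, hf⟩
      exact ⟨a, b, hd, hf⟩
    have g1mem : (monomial w₀ (1 : K) - monomial w₁ 1) ∈ D :=
      ⟨w₀, w₁, hdeg01, Ne.symm h10, h0ne, h1u, rfl⟩
    have hcw : w₀ + (u - w₀) = u := add_tsub_cancel_of_le h0le
    have hkey : ∀ b : Fin m →₀ ℕ, degA A u = degA A b →
        (monomial u (1 : K) - monomial b 1) ∈ Ideal.span D := by
      intro b hdb
      by_cases hbu : b = u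
      · rw [hbu, sub_self]
        exact zero_mem _
      · have hid : monomial u (1 : K) - monomial b 1 =
            monomial (u - w₀) 1 * (monomial w₀ 1 - monomial w₁ 1) +
              (monomial ((u - w₀) + w₁) 1 - monomial b 1) := by
          rw [mul_sub, monomial_mul, monomial_mul, one_mul,
            show (u - w₀) + w₀ = u from by rw [add_comm]; exact hcw]
          ring
        rw [hid]
        refine add_mem (Ideal.mul_mem_left _ _ (Ideal.subset_span g1mem)) ?_
        by_cases hcb : (u - w₀) + w₁ = b
        · rw [hcb, sub_self]
          exact zero_mem _
        · apply Ideal.subset_span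
          refine ⟨(u - w₀) + w₁, b, ?_, hcb, ?_, hbu, rfl⟩
          · have h1 : degA A ((u - w₀) + w₁) = degA A u := by
              rw [degA_add, ← hdeg01, ← degA_add, add_comm, hcw]
            rw [h1, hdb]
          · intro h
            apply h10
            have h2 : (u - w₀) + w₁ = (u - w₀) + w₀ := by
              rw [h, add_comm (u - w₀) w₀, hcw]
            exact add_left_cancel h2
    have hspanD : Ideal.span D = toricIdeal K A := by
      apply le_antisymm
      · apply Ideal.span_le.2
        rintro f ⟨a, b, hd, -, -, -, hf⟩
        exact Ideal.subset_span ⟨a, b, hd, hf⟩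
      · apply Ideal.span_le.2
        rintro f ⟨a, b, hd, rfl⟩
        by_cases hab : a = b
        · subst hab
          rw [sub_self]
          exact zero_mem _
        by_cases hau : a = u
        · rw [hau]
          exact hkey b (hau ▸ hd)
        by_cases hbu : b = u
        · rw [hbu]
          have hneg : monomial a (1 : K) - monomial u 1 =
              -(monomial u 1 - monomial a 1) := by ring
          rw [hneg]
          exact neg_mem (hkey a (hbu ▸ hd).symm)
        · exact Ideal.subset_span ⟨a, b, hd, hab, hau, hbu, rfl⟩
    obtain ⟨f, hfD, v, hf⟩ := hind D hBSD hspanD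
    obtain ⟨a, b, hd, hab, hau, hbu, rfl⟩ := hfD
    rcases hf with hf | hf
    · rcases eq_of_binom_eq hab hf.symm with ⟨h1, -⟩ | ⟨h1, -⟩
      · exact hau h1.symm
      · exact hbu h1.symm
    · rcases eq_of_binom_eq hab hf.symm with ⟨-, h2⟩ | ⟨-, h2⟩
      · exact hbu h2.symm
      · exact hau h2.symm
  · -- u ∈ TA → indispensable
    intro hu S hS hspan
    obtain ⟨⟨v, hvne, hvdeg⟩, hmin⟩ := hu
    have hmem : (monomial u (1 : K) - monomial v 1) ∈ Ideal.span S := by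
      rw [hspan]
      exact Ideal.subset_span ⟨u, v, hvdeg.symm, rfl⟩
    have hco : coeff u (monomial u (1 : K) - monomial v 1) ≠ 0 := by
      rw [coeff_binom, if_pos rfl, if_neg hvne]
      simp
    obtain ⟨a, b, hab, hd, hmemS, hle⟩ := key_extraction hS hmem hco
    rcases hle with h | h
    · have ha : a = u := hmin a ⟨b, Ne.symm hab, hd.symm⟩ (fun i => Finsupp.le_def.1 h i)
      subst ha
      exact ⟨_, hmemS, b, Or.inl rfl⟩
    · have hb : b = u := hmin b ⟨a, hab, hd⟩ (fun i => Finsupp.le_def.1 h i)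
      subst hb
      exact ⟨_, hmemS, a, Or.inr rfl⟩
end
end

section
/- A binomial B = x^u - x^v ∈ I_A is indispensable if and only if {x^u, x^v} is a 1-dimensional facet of the indispensable complex Δ_ind(A) and deg_A(B) is a minimal binomial A-degree. -/
open MvPolynomial

noncomputable section

namespace Statement17Aux

variable {K : Type*} [Field K] {m n : ℕ}

lemma degA_add (A : Fin m → Fin n → ℤ) (u v : Fin m →₀ ℕ) :
    degA A (u + v) = degA A u + degA A v := by
  unfold degA
  rw [← Finset.sum_add_distrib]
  refine Finset.sum_congr rfl fun i _ => ?_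
  rw [Finsupp.add_apply]
  push_cast
  rw [add_smul]

lemma degA_zero (A : Fin m → Fin n → ℤ) : degA A (0 : Fin m →₀ ℕ) = 0 := by
  unfold degA; simp

lemma degA_single (A : Fin m → Fin n → ℤ) (i : Fin m) :
    degA A (Finsupp.single i 1) = A i := by
  unfold degA
  rw [Finset.sum_eq_single i]
  · simp
  · intro j _ hj
    simp [Finsupp.single_apply, Ne.symm hj]
  · simp

lemma binom_eq {p q p' q' : Fin m →₀ ℕ}
    (h : monomial p (1 : K) - monomial q 1 = monomial p' 1 - monomial q' 1) :
    (p = p' ∧ q = q') ∨ (p = q' ∧ q = p') ∨ (p = q ∧ p' = q') := by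
  classical
  by_cases hpq : p = q
  · subst hpq
    rw [sub_self] at h
    have h2 := congrArg (coeff p') h.symm
    rw [coeff_sub, coeff_monomial, coeff_monomial, if_pos rfl, coeff_zero] at h2
    by_cases hq : q' = p'
    · exact Or.inr (Or.inr ⟨rfl, hq.symm⟩)
    · rw [if_neg hq] at h2; simp at h2
  · have hp : (1 : K) - 0 = (if p' = p then (1:K) else 0) - (if q' = p then 1 else 0) := by
      have h' := congrArg (coeff p) h
      rwa [coeff_sub, coeff_sub, coeff_monomial, coeff_monomial, coeff_monomial,
        coeff_monomial, if_pos rfl, if_neg (fun hh : q = p => hpq hh.symm)] at h'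
    have hq : (0 : K) - 1 = (if p' = q then (1:K) else 0) - (if q' = q then 1 else 0) := by
      have h' := congrArg (coeff q) h
      rwa [coeff_sub, coeff_sub, coeff_monomial, coeff_monomial, coeff_monomial,
        coeff_monomial, if_pos rfl, if_neg hpq] at h'
    by_cases h1 : p' = p <;> by_cases h2 : q' = p
    · rw [if_pos h1, if_pos h2] at hp; simp at hp
    · rw [if_neg (fun hh : p' = q => hpq (h1.symm.trans hh))] at hq
      by_cases h3 : q' = q
      · exact Or.inl ⟨h1.symm, h3.symm⟩
      · rw [if_neg h3] at hq; simp at hq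
    · rw [if_neg (fun hh : q' = q => hpq (h2.symm.trans hh))] at hq
      by_cases h4 : p' = q
      · exact Or.inr (Or.inl ⟨h2.symm, h4.symm⟩)
      · rw [if_neg h4] at hq; simp at hq
    · rw [if_neg h1, if_neg h2] at hp; simp at hp

/-- Connectivity relation generated by a set of binomials. -/
inductive Conn (S : Set (MvPolynomial (Fin m) K)) : (Fin m →₀ ℕ) → (Fin m →₀ ℕ) → Prop
  | of {w p q : Fin m →₀ ℕ} (h : monomial p (1 : K) - monomial q 1 ∈ S) :
      Conn S (w + p) (w + q)
  | refl (a) : Conn S a a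
  | symm {a b} : Conn S a b → Conn S b a
  | trans {a b c} : Conn S a b → Conn S b c → Conn S a c

open Classical in
def phi (S : Set (MvPolynomial (Fin m) K)) (c : Fin m →₀ ℕ) (g : MvPolynomial (Fin m) K) : K :=
  ∑ d ∈ g.support, if Conn S c d then coeff d g else 0

variable {S : Set (MvPolynomial (Fin m) K)} {c : Fin m →₀ ℕ}

open Classical in
lemma phi_superset {g : MvPolynomial (Fin m) K} {T : Finset (Fin m →₀ ℕ)}
    (hT : g.support ⊆ T) : phi S c g = ∑ d ∈ T, if Conn S c d then coeff d g else 0 := by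
  refine Finset.sum_subset hT fun d _ hd => ?_
  rw [MvPolynomial.notMem_support_iff.mp hd, ite_self]

lemma phi_zero : phi S c (0 : MvPolynomial (Fin m) K) = 0 := by
  unfold phi
  simp

lemma phi_add (g h : MvPolynomial (Fin m) K) : phi S c (g + h) = phi S c g + phi S c h := by
  classical
  rw [phi_superset (T := g.support ∪ h.support) MvPolynomial.support_add,
    phi_superset (T := g.support ∪ h.support) Finset.subset_union_left,
    phi_superset (T := g.support ∪ h.support) Finset.subset_union_right,
    ← Finset.sum_add_distrib]
  refine Finset.sum_congr rfl fun d _ => ?_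
  rw [coeff_add]
  split <;> simp

lemma phi_neg (g : MvPolynomial (Fin m) K) : phi S c (-g) = - phi S c g := by
  have := phi_add (S := S) (c := c) g (-g)
  rw [add_neg_cancel, phi_zero] at this
  exact (neg_eq_of_add_eq_zero_right this.symm).symm

lemma phi_sub (g h : MvPolynomial (Fin m) K) : phi S c (g - h) = phi S c g - phi S c h := by
  rw [sub_eq_add_neg, phi_add, phi_neg, sub_eq_add_neg]

open Classical in
lemma phi_monomial (d : Fin m →₀ ℕ) (a : K) :
    phi S c (monomial d a) = if Conn S c d then a else 0 := by
  by_cases ha : a = 0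
  · subst ha
    rw [map_zero, phi_zero, ite_self]
  · unfold phi
    rw [support_monomial, if_neg ha, Finset.sum_singleton, coeff_monomial, if_pos rfl]

lemma phi_mul_binom {p q : Fin m →₀ ℕ} (hS : monomial p (1 : K) - monomial q 1 ∈ S)
    (h : MvPolynomial (Fin m) K) : phi S c (h * (monomial p (1 : K) - monomial q 1)) = 0 := by
  classical
  induction h using MvPolynomial.induction_on' with
  | add g₁ g₂ ih1 ih2 => rw [add_mul, phi_add, ih1, ih2, add_zero]
  | monomial w a =>
    simp only [mul_sub, monomial_mul, mul_one]
    rw [phi_sub, phi_monomial, phi_monomial]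
    have hconn : Conn S c (w + p) ↔ Conn S c (w + q) :=
      ⟨fun hh => hh.trans (Conn.of hS), fun hh => hh.trans (Conn.symm (Conn.of hS))⟩
    by_cases hc : Conn S c (w + p)
    · rw [if_pos hc, if_pos (hconn.mp hc), sub_self]
    · rw [if_neg hc, if_neg (fun hh => hc (hconn.mpr hh)), sub_self]

lemma phi_span_zero {g : MvPolynomial (Fin m) K}
    (hS : ∀ f ∈ S, ∃ p q : Fin m →₀ ℕ, f = monomial p (1 : K) - monomial q 1)
    (hg : g ∈ Ideal.span S) : phi S c g = 0 := by
  have main : ∀ h : MvPolynomial (Fin m) K, phi S c (h * g) = 0 := by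
    refine Submodule.span_induction (p := fun x _ => ∀ h, phi S c (h * x) = 0)
      ?_ ?_ ?_ ?_ hg
    · intro x hx h
      obtain ⟨p, q, rfl⟩ := hS x hx
      exact phi_mul_binom hx h
    · intro h; rw [mul_zero, phi_zero]
    · intro x y _ _ hx hy h
      rw [mul_add, phi_add, hx, hy, add_zero]
    · intro a x _ hx h
      rw [smul_eq_mul, ← mul_assoc, hx]
  simpa using main 1

/-- Membership of a binomial in the span of a binomial set is connectivity. -/
lemma binom_mem_span_iff
    (hS : ∀ f ∈ S, ∃ p q : Fin m →₀ ℕ, f = monomial p (1 : K) - monomial q 1)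
    (u v : Fin m →₀ ℕ) :
    monomial u (1 : K) - monomial v 1 ∈ Ideal.span S ↔ Conn S u v := by
  constructor
  · intro hmem
    by_contra hnc
    have h0 := phi_span_zero (c := u) hS hmem
    rw [phi_sub, phi_monomial, phi_monomial, if_pos (Conn.refl u), if_neg hnc,
      sub_zero] at h0
    exact one_ne_zero h0
  · intro hconn
    induction hconn with
    | @of w p q h =>
      have heq : monomial (w + p) (1 : K) - monomial (w + q) 1 =
          monomial w 1 * (monomial p (1 : K) - monomial q 1) := by
        rw [mul_sub, monomial_mul, monomial_mul, mul_one]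
      rw [heq]
      exact Ideal.mul_mem_left _ _ (Ideal.subset_span h)
    | refl a => rw [sub_self]; exact zero_mem _
    | symm _ ih => simpa [neg_sub] using neg_mem ih
    | @trans a b d hab hbc ih1 ih2 =>
      have heq : monomial a (1:K) - monomial d 1 =
          (monomial a (1:K) - monomial b 1) + (monomial b (1:K) - monomial d 1) := by ring
      rw [heq]; exact add_mem ih1 ih2

end Statement17Aux
namespace Statement17Aux

variable {K : Type*} [Field K] {m n : ℕ}

def defSet (K : Type*) [Field K] {m n : ℕ} (A : Fin m → Fin n → ℤ) :
    Set (MvPolynomial (Fin m) K) :=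
  {f | ∃ u v : Fin m →₀ ℕ, degA A u = degA A v ∧ f = monomial u (1 : K) - monomial v 1}

def others (K : Type*) [Field K] {m n : ℕ} (A : Fin m → Fin n → ℤ) (u v : Fin m →₀ ℕ) :
    Set (MvPolynomial (Fin m) K) :=
  defSet K A \ {monomial u (1:K) - monomial v 1, monomial v 1 - monomial u 1}

lemma toric_eq (A : Fin m → Fin n → ℤ) : toricIdeal K A = Ideal.span (defSet K A) := rfl

lemma others_binomials (A : Fin m → Fin n → ℤ) (u v : Fin m →₀ ℕ) :
    ∀ f ∈ others K A u v, ∃ p q : Fin m →₀ ℕ, f = monomial p (1 : K) - monomial q 1 := by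
  rintro f ⟨⟨p, q, -, rfl⟩, -⟩
  exact ⟨p, q, rfl⟩

lemma mem_others (A : Fin m → Fin n → ℤ) (u v : Fin m →₀ ℕ) (hne : u ≠ v)
    {p q : Fin m →₀ ℕ} (hd : degA A p = degA A q)
    (h1 : ¬(p = u ∧ q = v)) (h2 : ¬(p = v ∧ q = u)) :
    monomial p (1:K) - monomial q 1 ∈ others K A u v := by
  refine ⟨⟨p, q, hd, rfl⟩, fun hmem => ?_⟩
  rcases hmem with h | h
  · rcases binom_eq h with ⟨ha, hb⟩ | ⟨ha, hb⟩ | ⟨-, hb⟩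
    · exact h1 ⟨ha, hb⟩
    · exact h2 ⟨ha, hb⟩
    · exact hne hb
  · rw [Set.mem_singleton_iff] at h
    rcases binom_eq h with ⟨ha, hb⟩ | ⟨ha, hb⟩ | ⟨-, hb⟩
    · exact h2 ⟨ha, hb⟩
    · exact h1 ⟨ha, hb⟩
    · exact hne hb.symm

lemma deg_eq_of_mem_others (A : Fin m → Fin n → ℤ) (u v : Fin m →₀ ℕ) {p q : Fin m →₀ ℕ}
    (h : monomial p (1:K) - monomial q 1 ∈ others K A u v) : degA A p = degA A q := by
  obtain ⟨⟨p', q', hd, heq⟩, -⟩ := h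
  rcases binom_eq heq with ⟨ha, hb⟩ | ⟨ha, hb⟩ | ⟨ha, -⟩
  · rw [ha, hb]; exact hd
  · rw [ha, hb]; exact hd.symm
  · rw [ha]

lemma conn_others_deg (A : Fin m → Fin n → ℤ) (u v : Fin m →₀ ℕ) {a b : Fin m →₀ ℕ}
    (h : Conn (others K A u v) a b) : degA A a = degA A b := by
  induction h with
  | @of w p q hm => rw [degA_add, degA_add, deg_eq_of_mem_others A u v hm]
  | refl a => rfl
  | symm _ ih => exact ih.symm
  | trans _ _ ih1 ih2 => exact ih1.trans ih2

lemma not_conn_of (A : Fin m → Fin n → ℤ) (u v : Fin m →₀ ℕ) (hne : u ≠ v)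
    (hdeg : degA A u = degA A v)
    (h1 : ∀ t, degA A t = degA A u → t = u ∨ t = v)
    (h2 : ∀ i, u i = 0 ∨ v i = 0) :
    ¬ Conn (others K A u v) u v := by
  intro hconn
  have key : ∀ a b : Fin m →₀ ℕ, Conn (others K A u v) a b → (a = u ↔ b = u) := by
    intro a b h
    induction h with
    | refl a => exact Iff.rfl
    | symm _ ih => exact ih.symm
    | trans _ _ ih1 ih2 => exact ih1.trans ih2
    | @of w p q hm =>
      have hdpq : degA A p = degA A q := deg_eq_of_mem_others A u v hm
      constructor
      · intro hau
        have hdq : degA A (w + q) = degA A u := by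
          rw [degA_add, ← hdpq, ← degA_add, hau]
        rcases h1 _ hdq with h' | h'
        · exact h'
        · exfalso
          by_cases hw : w = 0
          · subst hw
            rw [zero_add] at hau h'
            exact hm.2 (Or.inl (by rw [hau, h']))
          · obtain ⟨i, hi⟩ : ∃ i, w i ≠ 0 := by
              by_contra hc; push_neg at hc; exact hw (Finsupp.ext hc)
            have e1 := DFunLike.congr_fun hau i
            have e2 := DFunLike.congr_fun h' i
            rw [Finsupp.add_apply] at e1 e2
            rcases h2 i with h0 | h0 <;> omega
      · intro hbu
        have hdp : degA A (w + p) = degA A u := by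
          rw [degA_add, hdpq, ← degA_add, hbu]
        rcases h1 _ hdp with h' | h'
        · exact h'
        · exfalso
          by_cases hw : w = 0
          · subst hw
            rw [zero_add] at hbu h'
            exact hm.2 (Or.inr (by rw [Set.mem_singleton_iff, hbu, h']))
          · obtain ⟨i, hi⟩ : ∃ i, w i ≠ 0 := by
              by_contra hc; push_neg at hc; exact hw (Finsupp.ext hc)
            have e1 := DFunLike.congr_fun hbu i
            have e2 := DFunLike.congr_fun h' i
            rw [Finsupp.add_apply] at e1 e2
            rcases h2 i with h0 | h0 <;> omega
  exact hne ((key u v hconn).mp rfl).symm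

lemma conn_of_common (A : Fin m → Fin n → ℤ) (u v : Fin m →₀ ℕ) (hne : u ≠ v)
    (hdeg : degA A u = degA A v) (i : Fin m) (hui : u i ≠ 0) (hvi : v i ≠ 0) :
    Conn (others K A u v) u v := by
  set e : Fin m →₀ ℕ := Finsupp.single i 1 with he
  have heu : e ≤ u := Finsupp.single_le_iff.mpr (Nat.one_le_iff_ne_zero.mpr hui)
  have hev : e ≤ v := Finsupp.single_le_iff.mpr (Nat.one_le_iff_ne_zero.mpr hvi)
  have hu' : e + (u - e) = u := add_tsub_cancel_of_le heu
  have hv' : e + (v - e) = v := add_tsub_cancel_of_le hev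
  have hdpq : degA A (u - e) = degA A (v - e) := by
    have hx : degA A e + degA A (u - e) = degA A u := by rw [← degA_add, hu']
    have hy : degA A e + degA A (v - e) = degA A v := by rw [← degA_add, hv']
    exact add_left_cancel (hx.trans (hdeg.trans hy.symm))
  have hmem : monomial (u - e) (1:K) - monomial (v - e) 1 ∈ others K A u v := by
    refine mem_others A u v hne hdpq ?_ ?_
    · rintro ⟨hpu, -⟩
      have h := DFunLike.congr_fun hpu i
      rw [Finsupp.tsub_apply, he, Finsupp.single_apply, if_pos rfl] at h
      omega
    · rintro ⟨hpv, hqu⟩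
      have ha := DFunLike.congr_fun hpv i
      have hb := DFunLike.congr_fun hqu i
      rw [Finsupp.tsub_apply, he, Finsupp.single_apply, if_pos rfl] at ha hb
      omega
  have hc := Conn.of (w := e) hmem
  rwa [hu', hv'] at hc

lemma conn_of_third (A : Fin m → Fin n → ℤ) (u v : Fin m →₀ ℕ) (hne : u ≠ v)
    (hdeg : degA A u = degA A v) (t : Fin m →₀ ℕ) (ht : degA A t = degA A u)
    (htu : t ≠ u) (htv : t ≠ v) : Conn (others K A u v) u v := by
  have hm1 : monomial u (1:K) - monomial t 1 ∈ others K A u v := by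
    refine mem_others A u v hne ht.symm ?_ ?_
    · rintro ⟨-, h⟩; exact htv h
    · rintro ⟨h, -⟩; exact hne h
  have hm2 : monomial t (1:K) - monomial v 1 ∈ others K A u v := by
    refine mem_others A u v hne (ht.trans hdeg) ?_ ?_
    · rintro ⟨h, -⟩; exact htu h
    · rintro ⟨h, -⟩; exact htv h
  have c1 := Conn.of (w := 0) hm1
  have c2 := Conn.of (w := 0) hm2
  rw [zero_add, zero_add] at c1 c2
  exact c1.trans c2

lemma indisp_iff (A : Fin m → Fin n → ℤ) (u v : Fin m →₀ ℕ) (hne : u ≠ v)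
    (hdeg : degA A u = degA A v) :
    IsIndispensableBinomial K A (monomial u (1 : K) - monomial v 1) ↔
      monomial u (1 : K) - monomial v 1 ∉ Ideal.span (others K A u v) := by
  have hfI : monomial u (1 : K) - monomial v 1 ∈ toricIdeal K A :=
    Ideal.subset_span ⟨u, v, hdeg, rfl⟩
  constructor
  · rintro ⟨-, hall⟩ hmem
    have hbin : IsBinomialSet K A (others K A u v) := fun g hg => hg.1
    have hspan : Ideal.span (others K A u v) = toricIdeal K A := by
      refine le_antisymm (Ideal.span_le.mpr fun g hg => Ideal.subset_span hg.1) ?_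
      rw [toric_eq]
      refine Ideal.span_le.mpr fun g hg => ?_
      by_cases hgf : g = monomial u (1:K) - monomial v 1
      · subst hgf; exact hmem
      by_cases hgf' : g = monomial v (1:K) - monomial u 1
      · subst hgf'
        have := neg_mem hmem
        rwa [neg_sub] at this
      · refine Ideal.subset_span ⟨hg, fun hm => ?_⟩
        rcases hm with h | h
        · exact hgf h
        · exact hgf' (Set.mem_singleton_iff.mp h)
    rcases hall _ hbin hspan with h | h
    · exact h.2 (Or.inl rfl)
    · rw [neg_sub] at h
      exact h.2 (Or.inr (Set.mem_singleton_iff.mpr rfl))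
  · intro hnot
    refine ⟨hfI, fun S hbin hspan => ?_⟩
    by_contra hno
    push_neg at hno
    have hsub : S ⊆ others K A u v := by
      intro g hg
      obtain ⟨p, q, hd, rfl⟩ := hbin g hg
      refine ⟨⟨p, q, hd, rfl⟩, fun hm => ?_⟩
      rcases hm with h | h
      · exact hno.1 (h ▸ hg)
      · rw [Set.mem_singleton_iff] at h
        apply hno.2
        rw [neg_sub, ← h]
        exact hg
    exact hnot (Ideal.span_mono hsub (hspan ▸ hfI))

lemma exists_TA_le (A : Fin m → Fin n → ℤ) (t : Fin m →₀ ℕ) (ht : t ∈ MAset A) :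
    ∃ w ∈ TA A, ∀ i, w i ≤ t i := by
  by_cases hmin : ∀ w ∈ MAset A, (∀ i, w i ≤ t i) → w = t
  · exact ⟨t, ⟨ht, hmin⟩, fun i => le_refl _⟩
  · push_neg at hmin
    obtain ⟨w, hw, hwle, hwne⟩ := hmin
    obtain ⟨w', hw', hle'⟩ := exists_TA_le A w hw
    exact ⟨w', hw', fun i => (hle' i).trans (hwle i)⟩
termination_by ∑ i, t i
decreasing_by
  obtain ⟨i, hi⟩ : ∃ i, w i ≠ t i := by
    by_contra hc; push_neg at hc; exact hwne (Finsupp.ext hc)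
  exact Finset.sum_lt_sum (fun j _ => hwle j)
    ⟨i, Finset.mem_univ i, lt_of_le_of_ne (hwle i) hi⟩

lemma no_zero_deg (A : Fin m → Fin n → ℤ) (u v : Fin m →₀ ℕ) (hdeg : degA A u = degA A v)
    (h1 : ∀ t, degA A t = degA A u → t = u ∨ t = v) :
    ∀ s : Fin m →₀ ℕ, degA A s = 0 → s = 0 := by
  intro s hs
  by_contra hs0
  have hus : degA A (u + s) = degA A u := by rw [degA_add, hs, add_zero]
  have hneq : u + s ≠ u := fun hh => hs0 (add_eq_left.mp hh)
  rcases h1 _ hus with h | h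
  · exact hneq h
  · have hvs : degA A (v + s) = degA A u := by rw [degA_add, hs, add_zero, hdeg]
    rcases h1 _ hvs with h' | h'
    · have hss : u + (s + s) = u := by rw [← add_assoc, h, h']
      refine hs0 (Finsupp.ext fun i => ?_)
      have h0 := DFunLike.congr_fun hss i
      rw [Finsupp.add_apply, Finsupp.add_apply] at h0
      simp only [Finsupp.coe_zero, Pi.zero_apply]
      omega
    · exact hs0 (add_eq_left.mp h')

lemma min_of (A : Fin m → Fin n → ℤ) (u v : Fin m →₀ ℕ) (hne : u ≠ v)
    (hdeg : degA A u = degA A v)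
    (h1 : ∀ t, degA A t = degA A u → t = u ∨ t = v)
    (h2 : ∀ i, u i = 0 ∨ v i = 0) :
    IsMinimalBinomialDegree A (degA A u) := by
  constructor
  · exact ⟨u, v, hne, rfl, hdeg.symm⟩
  · rintro c ⟨p, q, hpq, hp, hq⟩ ⟨⟨e, ⟨w, hw⟩, hbe⟩, hcb⟩
    by_cases hw0 : w = 0
    · subst hw0
      rw [degA_zero] at hw
      exact hcb (by rw [hbe, ← hw, add_zero])
    · have hdp : degA A (p + w) = degA A u := by rw [degA_add, hp, hw, ← hbe]
      have hdq : degA A (q + w) = degA A u := by rw [degA_add, hq, hw, ← hbe]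
      have hne' : p + w ≠ q + w := fun hh => hpq (add_right_cancel hh)
      obtain ⟨i, hi⟩ : ∃ i, w i ≠ 0 := by
        by_contra hc; push_neg at hc; exact hw0 (Finsupp.ext hc)
      have hui : u i ≠ 0 ∧ v i ≠ 0 := by
        rcases h1 _ hdp with hpu | hpu <;> rcases h1 _ hdq with hqu | hqu
        · exact absurd (hpu.trans hqu.symm) hne'
        · have e1 := DFunLike.congr_fun hpu i
          have e2 := DFunLike.congr_fun hqu i
          rw [Finsupp.add_apply] at e1 e2
          constructor <;> omega
        · have e1 := DFunLike.congr_fun hpu i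
          have e2 := DFunLike.congr_fun hqu i
          rw [Finsupp.add_apply] at e1 e2
          constructor <;> omega
        · exact absurd (hpu.trans hqu.symm) hne'
      rcases h2 i with h | h
      · exact hui.1 h
      · exact hui.2 h

lemma memTA_of (A : Fin m → Fin n → ℤ) (u v : Fin m →₀ ℕ) (hne : u ≠ v)
    (hdeg : degA A u = degA A v)
    (h1 : ∀ t, degA A t = degA A u → t = u ∨ t = v)
    (h2 : ∀ i, u i = 0 ∨ v i = 0) : u ∈ TA A := by
  have hmin := min_of A u v hne hdeg h1 h2
  refine ⟨⟨v, Ne.symm hne, hdeg.symm⟩, ?_⟩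
  intro w hw hwle
  obtain ⟨t', ht'ne, ht'deg⟩ := hw
  by_cases hc : degA A w = degA A u
  · rcases h1 _ hc with h | h
    · exact h
    · exfalso
      subst h
      by_cases hv0 : w = 0
      · subst hv0
        exact hne (no_zero_deg A u 0 hdeg h1 u (hdeg.trans (degA_zero A)))
      · obtain ⟨i, hi⟩ : ∃ i, w i ≠ 0 := by
          by_contra hcc; push_neg at hcc; exact hv0 (Finsupp.ext hcc)
        have := hwle i
        rcases h2 i with h' | h'
        · omega
        · exact hi h'
  · exfalso
    have hwle' : w ≤ u := Finsupp.le_def.mpr hwle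
    have hsplit : w + (u - w) = u := add_tsub_cancel_of_le hwle'
    refine hmin.2 (degA A w) ⟨t', w, ht'ne, ht'deg, rfl⟩
      ⟨⟨degA A (u - w), ⟨u - w, rfl⟩, ?_⟩, hc⟩
    rw [← degA_add, hsplit]

lemma B_forward (A : Fin m → Fin n → ℤ) (u v : Fin m →₀ ℕ) (hne : u ≠ v)
    (hdeg : degA A u = degA A v)
    (h1 : ∀ t, degA A t = degA A u → t = u ∨ t = v)
    (h2 : ∀ i, u i = 0 ∨ v i = 0) :
    {w ∈ TA A | degA A w = degA A u} = {u, v} ∧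
      IsMinimalBinomialDegree A (degA A u) := by
  have h1' : ∀ t, degA A t = degA A v → t = v ∨ t = u := fun t ht =>
    Or.symm (h1 t (ht.trans hdeg.symm))
  have h2' : ∀ i, v i = 0 ∨ u i = 0 := fun i => Or.symm (h2 i)
  constructor
  · ext w
    simp only [Set.mem_setOf_eq, Set.mem_insert_iff, Set.mem_singleton_iff]
    constructor
    · rintro ⟨-, hd⟩
      exact h1 _ hd
    · rintro (rfl | rfl)
      · exact ⟨memTA_of A w v hne hdeg h1 h2, rfl⟩
      · exact ⟨memTA_of A w u (Ne.symm hne) hdeg.symm h1' h2', hdeg.symm⟩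
  · exact min_of A u v hne hdeg h1 h2

lemma B_backward (A : Fin m → Fin n → ℤ) (u v : Fin m →₀ ℕ) (hne : u ≠ v)
    (hdeg : degA A u = degA A v)
    (hT : {w ∈ TA A | degA A w = degA A u} = {u, v})
    (hmin : IsMinimalBinomialDegree A (degA A u)) :
    (∀ t, degA A t = degA A u → t = u ∨ t = v) ∧ (∀ i, u i = 0 ∨ v i = 0) := by
  have hTm : ∀ w : Fin m →₀ ℕ, (w ∈ TA A ∧ degA A w = degA A u) ↔ (w = u ∨ w = v) := by
    intro w
    have := Set.ext_iff.mp hT w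
    simpa only [Set.mem_setOf_eq, Set.mem_insert_iff, Set.mem_singleton_iff] using this
  have huTA : u ∈ TA A := ((hTm u).mpr (Or.inl rfl)).1
  have hvTA : v ∈ TA A := ((hTm v).mpr (Or.inr rfl)).1
  have hz : ∀ s : Fin m →₀ ℕ, degA A s = 0 → s = 0 := by
    intro s hs
    by_contra hs0
    by_cases hb : degA A u = 0
    · have h0M : (0 : Fin m →₀ ℕ) ∈ MAset A := ⟨s, hs0, by rw [hs, degA_zero]⟩
      have h0TA : (0 : Fin m →₀ ℕ) ∈ TA A :=
        ⟨h0M, fun w _ hwle => Finsupp.ext fun i => Nat.le_zero.mp (hwle i)⟩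
      rcases (hTm 0).mp ⟨h0TA, by rw [degA_zero, hb]⟩ with h | h
      · have hv0 : v ≠ 0 := fun hh => hne ((h.symm.trans hh.symm).symm ▸ rfl)
        have h00 := hvTA.2 0 h0M (fun i => Nat.zero_le _)
        exact hv0 h00.symm
      · have hu0 : u ≠ 0 := fun hh => hne (hh.trans h)
        have h00 := huTA.2 0 h0M (fun i => Nat.zero_le _)
        exact hu0 h00.symm
    · exact hmin.2 0 ⟨s, 0, hs0, hs, degA_zero A⟩
        ⟨⟨degA A u, ⟨u, rfl⟩, (zero_add _).symm⟩, fun hh => hb hh.symm⟩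
  constructor
  · intro t ht
    by_contra hc
    push_neg at hc
    obtain ⟨htu, htv⟩ := hc
    have htM : t ∈ MAset A := ⟨u, Ne.symm htu, ht.symm⟩
    obtain ⟨w₀, hw₀TA, hw₀le⟩ := exists_TA_le A t htM
    obtain ⟨t', ht'ne, ht'deg⟩ := hw₀TA.1
    have hwle' : w₀ ≤ t := Finsupp.le_def.mpr hw₀le
    have hsplit : w₀ + (t - w₀) = t := add_tsub_cancel_of_le hwle'
    by_cases hc0 : degA A w₀ = degA A u
    · have hw₀t : w₀ ≠ t := by
        rcases (hTm w₀).mp ⟨hw₀TA, hc0⟩ with rfl | rfl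
        · exact Ne.symm htu
        · exact Ne.symm htv
      have hs0 : t - w₀ ≠ 0 := fun hh => hw₀t (by rw [← hsplit, hh, add_zero])
      have hdz : degA A (t - w₀) = 0 := by
        have h' : degA A w₀ + degA A (t - w₀) = degA A t := by rw [← degA_add, hsplit]
        rw [hc0, ht] at h'
        have h'' : degA A u + degA A (t - w₀) = degA A u + 0 := by rw [add_zero]; exact h'
        exact add_left_cancel h''
      exact hs0 (hz _ hdz)
    · refine hmin.2 (degA A w₀) ⟨t', w₀, ht'ne, ht'deg, rfl⟩
        ⟨⟨degA A (t - w₀), ⟨t - w₀, rfl⟩, ?_⟩, hc0⟩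
      rw [← ht, ← degA_add, hsplit]
  · intro i
    by_contra hc
    push_neg at hc
    obtain ⟨hui, hvi⟩ := hc
    set e : Fin m →₀ ℕ := Finsupp.single i 1 with he
    have heu : e ≤ u := Finsupp.single_le_iff.mpr (Nat.one_le_iff_ne_zero.mpr hui)
    have hev : e ≤ v := Finsupp.single_le_iff.mpr (Nat.one_le_iff_ne_zero.mpr hvi)
    have hu' : e + (u - e) = u := add_tsub_cancel_of_le heu
    have hv' : e + (v - e) = v := add_tsub_cancel_of_le hev
    have hdu : A i + degA A (u - e) = degA A u := by
      have hx : degA A e + degA A (u - e) = degA A u := by rw [← degA_add, hu']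
      rw [← degA_single A i, ← he]
      exact hx
    have hdv : A i + degA A (v - e) = degA A v := by
      have hx : degA A e + degA A (v - e) = degA A v := by rw [← degA_add, hv']
      rw [← degA_single A i, ← he]
      exact hx
    by_cases hAi : A i = 0
    · have hdeq : degA A (u - e) = degA A u := by rw [← hdu, hAi, zero_add]
      have hne' : u ≠ u - e := by
        intro hh
        have h := DFunLike.congr_fun hh i
        rw [Finsupp.tsub_apply, he, Finsupp.single_apply, if_pos rfl] at h
        omega
      have hM : u - e ∈ MAset A := ⟨u, hne', hdeq.symm⟩
      have h00 := huTA.2 (u - e) hM (fun j => by rw [Finsupp.tsub_apply]; exact Nat.sub_le _ _)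
      exact hne' h00.symm
    · have hnepq : u - e ≠ v - e := fun hh => hne (by rw [← hu', ← hv', hh])
      have hdpq : degA A (v - e) = degA A (u - e) :=
        (add_left_cancel (hdu.trans (hdeg.trans hdv.symm))).symm
      refine hmin.2 (degA A (u - e)) ⟨u - e, v - e, hnepq, rfl, hdpq⟩
        ⟨⟨A i, ⟨Finsupp.single i 1, degA_single A i⟩, ?_⟩, ?_⟩
      · rw [← hdu, add_comm]
      · intro hh
        rw [hh] at hdu
        exact hAi (add_eq_right.mp hdu)

end Statement17Aux

/-- A binomial `x^u - x^v ∈ I_A` is indispensable if and only if `{x^u, x^v}` is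
a 1-dimensional facet of the indispensable complex (i.e. `u, v` are the only
elements of `T_A` of their `A`-degree) and its `A`-degree is a minimal binomial
`A`-degree. -/
theorem statement17 {K : Type*} [Field K] {m n : ℕ} (A : Fin m → Fin n → ℤ)
    (hA : IsPointed A) (u v : Fin m →₀ ℕ) (hne : u ≠ v) (hdeg : degA A u = degA A v) :
    IsIndispensableBinomial K A (monomial u (1 : K) - monomial v 1) ↔
      ({w ∈ TA A | degA A w = degA A u} = {u, v} ∧
        IsMinimalBinomialDegree A (degA A u)) := by
  rw [Statement17Aux.indisp_iff A u v hne hdeg]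
  rw [show (monomial u (1:K) - monomial v 1 ∈
        Ideal.span (Statement17Aux.others K A u v)) ↔
      Statement17Aux.Conn (Statement17Aux.others K A u v) u v from
    Statement17Aux.binom_mem_span_iff (Statement17Aux.others_binomials A u v) u v]
  constructor
  · intro hnc
    have h1 : ∀ t, degA A t = degA A u → t = u ∨ t = v := by
      intro t ht
      by_contra hcc
      push_neg at hcc
      exact hnc (Statement17Aux.conn_of_third A u v hne hdeg t ht hcc.1 hcc.2)
    have h2 : ∀ i, u i = 0 ∨ v i = 0 := by
      intro i
      by_contra hcc
      push_neg at hcc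
      exact hnc (Statement17Aux.conn_of_common A u v hne hdeg i hcc.1 hcc.2)
    exact Statement17Aux.B_forward A u v hne hdeg h1 h2
  · rintro ⟨hT, hmin⟩
    obtain ⟨h1, h2⟩ := Statement17Aux.B_backward A u v hne hdeg hT hmin
    exact Statement17Aux.not_conn_of A u v hne hdeg h1 h2
end
end
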